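/- Let F be an infinite field, n ≥ 3, and let g = (V,[,]) be an n-dimensional F-algebra such that [x,x] ∈ span_F(x) for all x ∈ V but there exist x,y ∈ V with [x,y] ∉ span_F(x,y). Then g degenerates to h_n, the direct sum of the 3-dimensional Heisenberg Lie algebra with the (n-3)-dimensional abelian Lie algebra. -/

import Mathlib

open scoped BigOperators

def actSV {F : Type*} [Field F] {n : ℕ} (g : GL (Fin n) F)
    (lam : Fin n → Fin n → Fin n → F) : Fin n → Fin n → Fin n → F :=
  fun a b c => ∑ i, ∑ j, ∑ k,
    (g : Matrix (Fin n) (Fin n) F) i a * (g : Matrix (Fin n) (Fin n) F) j b *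
      ((g⁻¹ : GL (Fin n) F) : Matrix (Fin n) (Fin n) F) c k * lam i j k

def orbitSV {F : Type*} [Field F] {n : ℕ} (lam : Fin n → Fin n → Fin n → F) :
    Set (Fin n → Fin n → Fin n → F) :=
  {mu | ∃ g : GL (Fin n) F, mu = actSV g lam}

def zClosure {F : Type*} [Field F] {n : ℕ} (S : Set (Fin n → Fin n → Fin n → F)) :
    Set (Fin n → Fin n → Fin n → F) :=
  {mu | ∀ p : MvPolynomial (Fin n × Fin n × Fin n) F,
      (∀ lam ∈ S, MvPolynomial.eval (fun t => lam t.1 t.2.1 t.2.2) p = 0) →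
      MvPolynomial.eval (fun t => mu t.1 t.2.1 t.2.2) p = 0}

/-! Auxiliary definitions and lemmas -/

def qwt {n : ℕ} (i : Fin n) : ℕ := if i.val < 2 then 1 else 2

def ewt {n : ℕ} (T : Fin n × Fin n × Fin n) : ℕ := qwt T.1 + qwt T.2.1 - qwt T.2.2

lemma ewt_eq_zero_iff {n : ℕ} (T : Fin n × Fin n × Fin n) :
    ewt T = 0 ↔ (T.1.val < 2 ∧ T.2.1.val < 2 ∧ 2 ≤ T.2.2.val) := by
  obtain ⟨a, b, c⟩ := T
  simp only [ewt, qwt]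
  split_ifs <;> simp <;> omega

lemma ext_basis {F V : Type*} [Field F] [AddCommGroup V] [Module F V]
    [FiniteDimensional F V] {n : ℕ} (hn : 3 ≤ n) (hV : Module.finrank F V = n)
    (f : Fin 3 → V) (li : LinearIndependent F f) :
    ∃ b : Module.Basis (Fin n) F V, ∀ i : Fin 3, b ⟨i.val, by omega⟩ = f i := by
  set W := Submodule.span F (Set.range f) with hW
  obtain ⟨U, hU⟩ := Submodule.exists_isCompl W
  let bW : Module.Basis (Fin 3) F W := Module.Basis.span li
  have hrW : Module.finrank F W = 3 := by
    rw [Module.finrank_eq_card_basis bW]; simp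
  have hrU : Module.finrank F U = n - 3 := by
    have := Submodule.finrank_add_eq_of_isCompl hU
    omega
  let bU : Module.Basis (Fin (n-3)) F U := (Module.finBasis F U).reindex (finCongr hrU)
  have hsum : 3 + (n - 3) = n := by omega
  let e : Fin 3 ⊕ Fin (n - 3) ≃ Fin n := finSumFinEquiv.trans (finCongr hsum)
  refine ⟨((bW.prod bU).map (Submodule.prodEquivOfIsCompl W U hU)).reindex e, ?_⟩
  intro i
  have hei : e (Sum.inl i) = ⟨i.val, by omega⟩ := by
    apply Fin.ext; simp [e]
  rw [← hei, Module.Basis.reindex_apply, Equiv.symm_apply_apply, Module.Basis.map_apply]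
  rw [Module.Basis.prod_apply]
  simp [Submodule.coe_prodEquivOfIsCompl', bW]
  exact congrArg Subtype.val (Module.Basis.span_apply li i)

lemma li_triple {F V : Type*} [Field F] [AddCommGroup V] [Module F V]
    (B : V →ₗ[F] V →ₗ[F] V)
    (h1 : ∀ x : V, B x x ∈ Submodule.span F {x})
    {x y : V} (hz : B x y ∉ Submodule.span F {x, y}) :
    LinearIndependent F ![x, y, B x y] := by
  rw [Fintype.linearIndependent_iff]
  intro c hc
  have hsum : c 0 • x + c 1 • y + c 2 • B x y = 0 := by
    simpa [Fin.sum_univ_three] using hc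
  have hc2 : c 2 = 0 := by
    by_contra h
    apply hz
    rw [Submodule.mem_span_pair]
    refine ⟨-(c 0)/(c 2), -(c 1)/(c 2), ?_⟩
    apply smul_right_injective V h
    have e0 : c 2 * (-(c 0)/(c 2)) = -(c 0) := by rw [mul_comm]; exact div_mul_cancel₀ _ h
    have e1 : c 2 * (-(c 1)/(c 2)) = -(c 1) := by rw [mul_comm]; exact div_mul_cancel₀ _ h
    show c 2 • ((-(c 0)/(c 2)) • x + (-(c 1)/(c 2)) • y) = c 2 • B x y
    rw [smul_add, smul_smul, smul_smul, e0, e1]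
    linear_combination (norm := module) (-1 : F) • hsum
  have hc1 : c 1 = 0 := by
    by_contra h
    apply hz
    have hy : y = (-(c 0)/(c 1)) • x := by
      apply smul_right_injective V h
      have e0 : c 1 * (-(c 0)/(c 1)) = -(c 0) := by rw [mul_comm]; exact div_mul_cancel₀ _ h
      show c 1 • y = c 1 • ((-(c 0)/(c 1)) • x)
      rw [smul_smul, e0]
      rw [hc2, zero_smul, add_zero] at hsum
      rw [eq_neg_of_add_eq_zero_right hsum, neg_smul]
    rw [hy, map_smul]
    obtain ⟨a, ha⟩ := Submodule.mem_span_singleton.mp (h1 x)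
    rw [← ha]
    rw [Submodule.mem_span_pair]
    exact ⟨(-(c 0)/(c 1)) * a, 0, by module⟩
  have hc0 : c 0 = 0 := by
    by_contra h
    have hx : x = 0 := by
      rw [hc1, hc2] at hsum
      simp at hsum
      rcases hsum with h' | h'
      · exact absurd h' h
      · exact h'
    apply hz
    rw [hx]
    simp
  intro i
  fin_cases i <;> assumption

def diagGL {F : Type*} [Field F] {n : ℕ} (d : Fin n → F) (hd : ∀ i, d i ≠ 0) :
    GL (Fin n) F where
  val := Matrix.diagonal d
  inv := Matrix.diagonal fun i => (d i)⁻¹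
  val_inv := by
    rw [Matrix.diagonal_mul_diagonal]
    convert Matrix.diagonal_one using 2
    funext i; exact mul_inv_cancel₀ (hd i)
  inv_val := by
    rw [Matrix.diagonal_mul_diagonal]
    convert Matrix.diagonal_one using 2
    funext i; exact inv_mul_cancel₀ (hd i)

lemma actSV_diag {F : Type*} [Field F] {n : ℕ} (d : Fin n → F) (hd : ∀ i, d i ≠ 0)
    (lam : Fin n → Fin n → Fin n → F) (a b c : Fin n) :
    actSV (diagGL d hd) lam a b c = d a * d b * (d c)⁻¹ * lam a b c := by
  have hinv : ((diagGL d hd)⁻¹ : GL (Fin n) F) =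
      (Matrix.diagonal fun i => (d i)⁻¹ : Matrix (Fin n) (Fin n) F) := rfl
  have hval : ((diagGL d hd) : Matrix (Fin n) (Fin n) F) = Matrix.diagonal d := rfl
  simp [actSV, hinv, hval, Matrix.diagonal_apply, ite_mul, mul_ite, zero_mul, mul_zero,
    Finset.sum_ite_eq, Finset.sum_ite_eq']

lemma eval_eval₂ {F σ : Type*} [Field F] (p : MvPolynomial σ F)
    (g : σ → Polynomial F) (t : F) :
    Polynomial.eval t (MvPolynomial.eval₂ Polynomial.C g p) =
      MvPolynomial.eval (fun i => Polynomial.eval t (g i)) p := by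
  have h := MvPolynomial.eval₂_comp_left (Polynomial.evalRingHom t) Polynomial.C g p
  simp only [Polynomial.coe_evalRingHom] at h
  rw [h]
  have : (Polynomial.evalRingHom t).comp Polynomial.C = RingHom.id F := by
    ext a; simp
  rw [this]
  rfl

set_option maxHeartbeats 1000000 in
/-- over an infinite field, an `n`-dimensional algebra (`n ≥ 3`) with
`[x,x] ∈ span{x}` for all `x` but `[x,y] ∉ span{x,y}` for some `x,y` degenerates to
`h_n`, the Heisenberg algebra plus abelian: the structure vector `η` (with only nonzero
entries `η_{123} = 1 = -η_{213}`) lies in the closure of the orbit of any structure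
vector of the algebra. -/
theorem degeneration_to_heisenberg {F V : Type*} [Field F] [Infinite F]
    [AddCommGroup V] [Module F V] [FiniteDimensional F V]
    {n : ℕ} (hn : 3 ≤ n) (hV : Module.finrank F V = n)
    (B : V →ₗ[F] V →ₗ[F] V)
    (h1 : ∀ x : V, B x x ∈ Submodule.span F {x})
    (h2 : ∃ x y : V, B x y ∉ Submodule.span F {x, y})
    (eta : Fin n → Fin n → Fin n → F)
    (heta : ∀ i j k : Fin n,
      eta i j k =
        if i = (⟨0, by omega⟩ : Fin n) ∧ j = (⟨1, by omega⟩ : Fin n) ∧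
            k = (⟨2, by omega⟩ : Fin n) then 1
        else if i = (⟨1, by omega⟩ : Fin n) ∧ j = (⟨0, by omega⟩ : Fin n) ∧
            k = (⟨2, by omega⟩ : Fin n) then -1
        else 0) :
    ∃ lam : Fin n → Fin n → Fin n → F,
      (∃ b : Module.Basis (Fin n) F V, ∀ i j, B (b i) (b j) = ∑ k, lam i j k • b k) ∧
      eta ∈ zClosure (orbitSV lam) := by
  obtain ⟨x, y, hz⟩ := h2
  set z := B x y with hzdef
  have li := li_triple B h1 hz
  obtain ⟨b, hb⟩ := ext_basis hn hV ![x, y, z] li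
  set i0 : Fin n := ⟨0, by omega⟩ with hi0
  set i1 : Fin n := ⟨1, by omega⟩ with hi1
  set i2 : Fin n := ⟨2, by omega⟩ with hi2
  have hb0 : b i0 = x := hb 0
  have hb1 : b i1 = y := hb 1
  have hb2 : b i2 = z := hb 2
  set lam : Fin n → Fin n → Fin n → F :=
    fun i j k => b.repr (B (b i) (b j)) k with hlam
  refine ⟨lam, ⟨b, fun i j => (b.sum_repr (B (b i) (b j))).symm⟩, ?_⟩
  -- eta in terms of values
  have heta' : ∀ a bb c : Fin n, eta a bb c =
      if a.val = 0 ∧ bb.val = 1 ∧ c.val = 2 then 1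
      else if a.val = 1 ∧ bb.val = 0 ∧ c.val = 2 then -1 else 0 := by
    intro a bb c
    rw [heta]
    simp only [Fin.ext_iff, hi0, hi1, hi2, Fin.val_mk]
  -- structure constant facts
  obtain ⟨ax, hax⟩ := Submodule.mem_span_singleton.mp (h1 x)
  obtain ⟨ay, hay⟩ := Submodule.mem_span_singleton.mp (h1 y)
  obtain ⟨cs, hcs⟩ := Submodule.mem_span_singleton.mp (h1 (x + y))
  have hexp : B (x + y) (x + y) = B x x + B x y + B y x + B y y := by
    simp only [map_add, LinearMap.add_apply]
    abel
  have hyx : B y x = (cs - ax) • x + (cs - ay) • y - z := by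
    rw [hexp, ← hax, ← hay] at hcs
    rw [hzdef]
    linear_combination (norm := module) (-1 : F) • hcs
  have hrx : b.repr x = Finsupp.single i0 1 := by rw [← hb0]; exact b.repr_self i0
  have hry : b.repr y = Finsupp.single i1 1 := by rw [← hb1]; exact b.repr_self i1
  have hrz : b.repr z = Finsupp.single i2 1 := by rw [← hb2]; exact b.repr_self i2
  -- the key entrywise identity at t = 0
  have key : ∀ T : Fin n × Fin n × Fin n,
      lam T.1 T.2.1 T.2.2 * (0 : F) ^ (ewt T) = eta T.1 T.2.1 T.2.2 := by
    rintro ⟨a, bb, c⟩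
    by_cases he : ewt (a, bb, c) = 0
    · rw [he, pow_zero, mul_one]
      obtain ⟨ha2t, hbb2t, hc2t⟩ := (ewt_eq_zero_iff _).mp he
      have ha2 : a.val < 2 := ha2t
      have hbb2 : bb.val < 2 := hbb2t
      have hc2 : 2 ≤ c.val := hc2t
      have hci0 : i0 ≠ c := by intro h; rw [← h] at hc2; simp [hi0] at hc2
      have hci1 : i1 ≠ c := by intro h; rw [← h] at hc2; simp [hi1] at hc2
      have ha' : a = i0 ∨ a = i1 := by
        rcases (show a.val = 0 ∨ a.val = 1 by omega) with h | h
        · left; exact Fin.ext h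
        · right; exact Fin.ext h
      have hbb' : bb = i0 ∨ bb = i1 := by
        rcases (show bb.val = 0 ∨ bb.val = 1 by omega) with h | h
        · left; exact Fin.ext h
        · right; exact Fin.ext h
      rcases ha' with rfl | rfl <;> rcases hbb' with rfl | rfl
      · -- (i0, i0)
        have : lam i0 i0 c = 0 := by
          simp [hlam, hb0, ← hax, map_smul, hrx, Finsupp.single_apply, if_neg hci0]
        rw [this, heta']
        simp only [hi0]
        norm_num
      · -- (i0, i1)
        have : lam i0 i1 c = if i2 = c then 1 else 0 := by
          simp [hlam, hb0, hb1, ← hzdef, hrz, Finsupp.single_apply]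
        rw [this, heta']
        by_cases hcc : c = i2
        · subst hcc
          simp [hi0, hi1, hi2]
        · have hcv : ¬ (c.val = 2) := fun h => hcc (Fin.ext (by simpa [hi2] using h))
          rw [if_neg (fun h => hcc h.symm)]
          simp [hi0, hi1, hcv]
      · -- (i1, i0)
        have : lam i1 i0 c = -(if i2 = c then 1 else 0) := by
          simp only [hlam, hb0, hb1, hyx]
          rw [map_sub, map_add, map_smul, map_smul, hrx, hry, hrz]
          simp [Finsupp.single_apply, if_neg hci0, if_neg hci1]
        rw [this, heta']
        by_cases hcc : c = i2
        · subst hcc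
          simp [hi0, hi1, hi2]
        · have hcv : ¬ (c.val = 2) := fun h => hcc (Fin.ext (by simpa [hi2] using h))
          rw [if_neg (fun h => hcc h.symm)]
          simp [hi0, hi1, hcv]
      · -- (i1, i1)
        have : lam i1 i1 c = 0 := by
          simp [hlam, hb1, ← hay, map_smul, hry, Finsupp.single_apply, if_neg hci1]
        rw [this, heta']
        simp only [hi1]
        norm_num
    · rw [zero_pow he, mul_zero, heta']
      split_ifs with H1 H2
      · exfalso; apply he
        rw [ewt_eq_zero_iff]
        exact ⟨by omega, by omega, by omega⟩
      · exfalso; apply he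
        rw [ewt_eq_zero_iff]
        exact ⟨by omega, by omega, by omega⟩
      · rfl
  -- the degeneration
  intro p hp
  set Q : Polynomial F := MvPolynomial.eval₂ Polynomial.C
    (fun T => Polynomial.C (lam T.1 T.2.1 T.2.2) * Polynomial.X ^ ewt T) p with hQ
  have hQt : ∀ t : F, Q.eval t =
      MvPolynomial.eval (fun T => lam T.1 T.2.1 T.2.2 * t ^ ewt T) p := by
    intro t
    rw [hQ, eval_eval₂]
    exact congrArg (fun g => MvPolynomial.eval g p) (funext fun T => by simp)
  have hroot : ∀ t : F, t ≠ 0 → Q.eval t = 0 := by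
    intro t ht
    rw [hQt]
    have hd : ∀ i : Fin n, t ^ qwt i ≠ 0 := fun i => pow_ne_zero _ ht
    have hact : ∀ a bb c : Fin n,
        actSV (diagGL (fun i => t ^ qwt i) hd) lam a bb c =
          lam a bb c * t ^ ewt (a, bb, c) := by
      intro a bb c
      rw [actSV_diag]
      have hsplit : qwt a + qwt bb = ewt (a, bb, c) + qwt c := by
        unfold ewt qwt; split_ifs <;> omega
      have h1' : t ^ qwt a * t ^ qwt bb = t ^ ewt (a, bb, c) * t ^ qwt c := by
        rw [← pow_add, ← pow_add, hsplit]
      rw [h1']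
      field_simp
    have := hp (actSV (diagGL (fun i => t ^ qwt i) hd) lam)
      ⟨diagGL (fun i => t ^ qwt i) hd, rfl⟩
    rw [← this]
    exact congrArg (fun g => MvPolynomial.eval g p)
      (funext fun T => (hact T.1 T.2.1 T.2.2).symm)
  have hQ0 : Q = 0 := by
    have hinf : ({(0 : F)}ᶜ : Set F).Infinite :=
      Set.Finite.infinite_compl (Set.finite_singleton 0)
    exact Polynomial.eq_zero_of_infinite_isRoot _
      (hinf.mono fun t ht => hroot t (Set.mem_compl_singleton_iff.mp ht))
  have h0 : Q.eval 0 = 0 := by rw [hQ0]; simp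
  rw [hQt 0] at h0
  rw [← h0]
  exact congrArg (fun g => MvPolynomial.eval g p)
    (funext fun T => (key T).symm)
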